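/- Let ν be an integral weight and E = E(ν) the irreducible finite-dimensional module with extremal weight ν. Define N_ν = {(α, m) ∈ R^+ × ℤ : -⟨ρ,α^∨⟩ ≤ m < -⟨ν+ρ,α^∨⟩}. Then for τ ∈ h*, there exist w ∈ W and a weight μ of E with μ > ν satisfying w·(τ+ν) = τ+μ with w a reflection s_α (α ∈ R) if and only if there exists (α, m) ∈ N_ν with ⟨τ, α^∨⟩ = m. In that case the weight is μ = ν − ⟨τ+ν+ρ, α^∨⟩α. -/
import Mathlib


/-!
STATEMENT 4: characterization of the hyperplane family H_ν.
Root system encoded by finite sets `R ⊇ Rplus` of roots in V together with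
the coroot pairing `pair λ β = ⟨λ, β^∨⟩`; reflections act by
`s_β λ = λ - ⟨λ,β^∨⟩β` and the dot action is `s_β · λ = s_β(λ+ρ) - ρ`.
Integral weights ν, ρ have integer pairings `nν`, `nρ` with all roots.
The weights of E = E(ν) are described by the predicate `isWeight`; since ν is
extremal, the weights on the β-string through ν are exactly the
`ν + zβ` with `z` between `0` and `-⟨ν,β^∨⟩` (hypothesis `hstring`), every
weight on the line `ν + kβ` has integer coordinate (`hline`), and
`ν < ν + zβ` iff `0 < z` for positive roots β (`hlt`, `lt'` is the standard
order on weights).  N_ν = {(β,m) ∈ R⁺ × ℤ : -⟨ρ,β^∨⟩ ≤ m < -⟨ν+ρ,β^∨⟩}.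
-/

open Finset

theorem stmt4 {k V : Type*} [Field k] [CharZero k] [AddCommGroup V] [Module k V]
    (R Rplus : Finset V) (hsub : Rplus ⊆ R)
    (hRpm : ∀ β ∈ R, β ∈ Rplus ∨ -β ∈ Rplus)
    (pair : V → V → k)
    (hadd : ∀ a b β, pair (a + b) β = pair a β + pair b β)
    (hneg : ∀ a β, pair a (-β) = -pair a β)
    (ρ ν τ : V)
    (nν nρ : V → ℤ)
    (hν : ∀ β ∈ R, pair ν β = (nν β : k))
    (hρ : ∀ β ∈ R, pair ρ β = (nρ β : k))
    (isWeight : V → Prop) (hνw : isWeight ν)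
    (hstring : ∀ β ∈ Rplus, ∀ z : ℤ,
      isWeight (ν + z • β) ↔ (min 0 (-nν β) ≤ z ∧ z ≤ max 0 (-nν β)))
    (hline : ∀ β ∈ Rplus, ∀ t : k, isWeight (ν + t • β) → ∃ z : ℤ, t = (z : k))
    (lt' : V → V → Prop)
    (hlt : ∀ β ∈ Rplus, ∀ z : ℤ, lt' ν (ν + z • β) ↔ 0 < z) :
    ((∃ β ∈ R, ∃ μ, isWeight μ ∧ lt' ν μ ∧
        ((τ + ν + ρ) - pair (τ + ν + ρ) β • β) - ρ = τ + μ) ↔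
      (∃ β ∈ Rplus, ∃ m : ℤ, -(nρ β) ≤ m ∧ m < -(nν β + nρ β) ∧ pair τ β = (m : k)))
    ∧ (∀ β ∈ Rplus, ∀ μ, isWeight μ → lt' ν μ →
        ((τ + ν + ρ) - pair (τ + ν + ρ) β • β) - ρ = τ + μ →
        μ = ν - pair (τ + ν + ρ) β • β) := by
  have key : ∀ β ∈ Rplus, ∀ μ, isWeight μ → lt' ν μ →
      μ = ν + (-(pair (τ + ν + ρ) β)) • β →
      ∃ m : ℤ, -(nρ β) ≤ m ∧ m < -(nν β + nρ β) ∧ pair τ β = (m : k) := by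
    intro β hβ μ hw hl hμ
    have hβR := hsub hβ
    obtain ⟨z, hz⟩ := hline β hβ _ (hμ ▸ hw)
    have hzsm : μ = ν + z • β := by
      rw [hμ, hz, Int.cast_smul_eq_zsmul]
    have hws : min 0 (-nν β) ≤ z ∧ z ≤ max 0 (-nν β) :=
      (hstring β hβ z).mp (hzsm ▸ hw)
    have hpos : 0 < z := (hlt β hβ z).mp (hzsm ▸ hl)
    have h2 := le_max_iff.mp hws.2
    refine ⟨-z - nν β - nρ β, by omega, by omega, ?_⟩
    have hc : pair (τ + ν + ρ) β = pair τ β + (nν β : k) + (nρ β : k) := by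
      rw [hadd, hadd, hν β hβR, hρ β hβR]
    have hz' : -(pair τ β + (nν β : k) + (nρ β : k)) = (z : k) := by
      rw [← hc, hz]
    push_cast
    linear_combination -hz'
  refine ⟨⟨?_, ?_⟩, fun β hβ μ _ _ heq => ?_⟩
  · rintro ⟨β, hβR, μ, hw, hl, heq⟩
    have hμ : μ = ν + (-(pair (τ + ν + ρ) β)) • β := by
      have h2 : τ + μ = τ + (ν + (-(pair (τ + ν + ρ) β)) • β) := by
        rw [← heq, neg_smul]; abel
      exact add_left_cancel h2
    rcases hRpm β hβR with h | h
    · exact ⟨β, h, key β h μ hw hl hμ⟩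
    · refine ⟨-β, h, key (-β) h μ hw hl ?_⟩
      rw [hneg, neg_neg, smul_neg, ← neg_smul, hμ]
  · rintro ⟨β, hβ, m, h1, h2, hτβ⟩
    have hβR := hsub hβ
    set z : ℤ := -m - nν β - nρ β with hzdef
    refine ⟨β, hβR, ν + z • β, ?_, ?_, ?_⟩
    · exact (hstring β hβ z).mpr
        ⟨le_trans (min_le_left _ _) (by omega),
         le_trans (by omega : z ≤ -nν β) (le_max_right _ _)⟩
    · exact (hlt β hβ z).mpr (by omega)
    · have hc : pair (τ + ν + ρ) β = ((m + nν β + nρ β : ℤ) : k) := by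
        rw [hadd, hadd, hν β hβR, hρ β hβR, hτβ]; push_cast; ring
      rw [hc]
      have hs : ((m + nν β + nρ β : ℤ) : k) • β = -(z • β) := by
        rw [← Int.cast_smul_eq_zsmul k z β, ← neg_smul]
        congr 1
        rw [hzdef]; push_cast; ring
      rw [hs]; abel
  · have h2 : τ + μ = τ + (ν - pair (τ + ν + ρ) β • β) := by
      rw [← heq]; abel
    exact add_left_cancel h2
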